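/- Define a sequence of graphs by H₀ = C₇ (the 7-cycle) and, for i ≥ 1, let Hᵢ be obtained from i+2 vertex-disjoint copies H¹,…,H^{i+2} of H_{i-1} by adding, for each (i+2)-tuple (v¹,…,v^{i+2}) of vertices with vʲ ∈ V(Hʲ), a new vertex adjacent exactly to v¹,…,v^{i+2}. Then for every i ≥ 0, χ(Hᵢ) = i + 3. -/

import Mathlib

/-- The construction adding, for each `k`-tuple of vertices across `k` disjoint
copies of `H`, a new vertex adjacent exactly to the vertices of the tuple. -/
def tupleExtension {V : Type} (H : SimpleGraph V) (k : ℕ) :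
    SimpleGraph ((Fin k × V) ⊕ (Fin k → V)) :=
  SimpleGraph.fromRel fun a b =>
    match a, b with
    | Sum.inl (i, u), Sum.inl (j, v) => i = j ∧ H.Adj u v
    | Sum.inl (i, u), Sum.inr f => f i = u
    | Sum.inr f, Sum.inl (i, u) => f i = u
    | Sum.inr _, Sum.inr _ => False

/-- The sequence `H₀ = C₇`, and `Hᵢ` obtained from `i+2` disjoint copies of
`H_{i-1}` by the tuple-extension construction. -/
def Hseq : (i : ℕ) → Σ V : Type, SimpleGraph V
  | 0 => ⟨Fin 7, SimpleGraph.cycleGraph 7⟩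
  | (i + 1) => ⟨_, tupleExtension (Hseq i).2 (i + 3)⟩

open SimpleGraph Function

lemma tupleExtension_colorable {V : Type} {H : SimpleGraph V} {k : ℕ}
    (h : H.Colorable k) : (tupleExtension H k).Colorable (k + 1) := by
  obtain ⟨C⟩ := h
  refine ⟨⟨fun a => match a with
    | Sum.inl (_, u) => Fin.castSucc (C u)
    | Sum.inr _ => Fin.last k, ?_⟩⟩
  rintro (⟨i, u⟩ | f) (⟨j, v⟩ | g) hadj
  · obtain ⟨hne, h1 | h2⟩ := hadj
    · simp only [SimpleGraph.top_adj, ne_eq, Fin.castSucc_inj]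
      exact C.valid h1.2
    · simp only [SimpleGraph.top_adj, ne_eq, Fin.castSucc_inj]
      exact fun he => C.valid h2.2 he.symm
  · simp only [SimpleGraph.top_adj, ne_eq]
    exact fun he => absurd he (Fin.castSucc_lt_last _).ne
  · simp only [SimpleGraph.top_adj, ne_eq]
    exact fun he => absurd he.symm (Fin.castSucc_lt_last _).ne
  · obtain ⟨hne, h1 | h2⟩ := hadj <;> exact absurd ‹False› not_false

lemma tupleExtension_not_colorable {V : Type} {H : SimpleGraph V} {k : ℕ}
    (h : ∀ C : H.Coloring (Fin k), Surjective C) :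
    ¬ (tupleExtension H k).Colorable k := by
  rintro ⟨C⟩
  have hrestr : ∀ j : Fin k, ∃ v : V, C (Sum.inl (j, v)) = j := by
    intro j
    have : Surjective fun u => C (Sum.inl (j, u)) := by
      refine h ⟨fun u => C (Sum.inl (j, u)), ?_⟩
      intro u v huv
      exact C.valid (by
        refine ⟨by simp [huv.ne], Or.inl ⟨rfl, huv⟩⟩)
    exact this j
  choose f hf using hrestr
  have hadj : ∀ j : Fin k, (tupleExtension H k).Adj (Sum.inr f) (Sum.inl (j, f j)) := by
    intro j
    exact ⟨by simp, Or.inl rfl⟩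
  have := fun j => (C.valid (hadj j))
  exact this _ (hf (C (Sum.inr f))).symm

lemma base_case : (SimpleGraph.cycleGraph 7).chromaticNumber = 3 := by
  have hcol : (SimpleGraph.cycleGraph 7).Colorable 3 := by
    refine ⟨⟨fun v => if v = 6 then 2 else ⟨v.val % 2, by omega⟩, ?_⟩⟩
    decide
  refine le_antisymm (by exact_mod_cast hcol.chromaticNumber_le) ?_
  have h01 : (SimpleGraph.cycleGraph 7).Adj 0 1 := by decide
  have h12 : (SimpleGraph.cycleGraph 7).Adj 1 2 := by decide
  have h23 : (SimpleGraph.cycleGraph 7).Adj 2 3 := by decide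
  have h34 : (SimpleGraph.cycleGraph 7).Adj 3 4 := by decide
  have h45 : (SimpleGraph.cycleGraph 7).Adj 4 5 := by decide
  have h56 : (SimpleGraph.cycleGraph 7).Adj 5 6 := by decide
  have h60 : (SimpleGraph.cycleGraph 7).Adj 6 0 := by decide
  let w : (SimpleGraph.cycleGraph 7).Walk 0 0 :=
    .cons h01 (.cons h12 (.cons h23 (.cons h34 (.cons h45 (.cons h56 (.cons h60 .nil))))))
  have hlen : w.length = 7 := rfl
  have := SimpleGraph.Walk.three_le_chromaticNumber_of_odd_loop w (by rw [hlen]; decide)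
  exact_mod_cast this

theorem stmt_4 (i : ℕ) : (Hseq i).2.chromaticNumber = (i : ℕ∞) + 3 := by
  induction i with
  | zero => simp only [Nat.cast_zero, zero_add]; exact base_case
  | succ i ih =>
    have hcolH : (Hseq i).2.Colorable (i + 3) := by
      rw [← chromaticNumber_le_iff_colorable, ih]
      push_cast; rfl
    have hsurj : ∀ C : (Hseq i).2.Coloring (Fin (i + 3)), Surjective C := by
      rw [← le_chromaticNumber_iff_forall_surjective, ih]
      push_cast; rfl
    have hup := tupleExtension_colorable hcolH
    have hlow := tupleExtension_not_colorable hsurj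
    show (tupleExtension (Hseq i).2 (i + 3)).chromaticNumber = _
    refine le_antisymm ?_ ?_
    · refine le_trans hup.chromaticNumber_le ?_
      push_cast; ring_nf; rfl
    · rw [← chromaticNumber_le_iff_colorable] at hlow
      push_neg at hlow
      have := Order.add_one_le_of_lt hlow
      refine le_trans ?_ this
      push_cast; ring_nf; rfl
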